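/- Assume a, b, d ∈ C²([0,R]), c ∈ C²(Ω̄), b(0) + c(0) = 0 and d(0) = 0. Extend the matrix coefficients to x = 0 by setting a_{j,j}(0) = a(0) for j = 1,2,3 and a_{j,k}(0) = 0 for j ≠ k. Then each coefficient a_{j,k} is Lipschitz-continuous on Ω̄: there exists L > 0 such that |a_{j,k}(x) − a_{j,k}(y)| ≤ L|x − y| for all x, y ∈ Ω̄ and all 1 ≤ j,k ≤ 3. -/

import Mathlib

set_option maxHeartbeats 1000000

lemma lip_aux {E F : Type*} [NormedAddCommGroup E] [NormedSpace ℝ E]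
    [NormedAddCommGroup F] [NormedSpace ℝ F] {f : E → F} {s : Set E}
    (hf : ContDiffOn ℝ 1 f s) (hconv : Convex ℝ s) (hcomp : IsCompact s)
    (hu : UniqueDiffOn ℝ s) :
    ∃ K : ℝ, 0 ≤ K ∧ ∀ x ∈ s, ∀ y ∈ s, ‖f x - f y‖ ≤ K * ‖x - y‖ := by
  obtain ⟨C, hC⟩ := hcomp.exists_bound_of_continuousOn
    (hf.continuousOn_fderivWithin hu le_rfl)
  refine ⟨max C 0, le_max_right _ _, fun x hx y hy => ?_⟩
  exact hconv.norm_image_sub_le_of_norm_fderivWithin_le (hf.differentiableOn one_ne_zero)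
    (fun z hz => (hC z hz).trans (le_max_left _ _)) hy hx

lemma coord_abs (x : EuclideanSpace ℝ (Fin 3)) (j : Fin 3) : |x j| ≤ ‖x‖ := by
  rw [EuclideanSpace.norm_eq, ← Real.sqrt_sq_eq_abs]
  apply Real.sqrt_le_sqrt
  calc x j ^ 2 = ‖x j‖ ^ 2 := by rw [Real.norm_eq_abs, sq_abs]
    _ ≤ ∑ i, ‖x i‖ ^ 2 := Finset.single_le_sum (fun i _ => sq_nonneg _)
        (Finset.mem_univ j) (f := fun i => ‖x i‖ ^ 2)

/-- unit vector difference estimate -/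
lemma unit_diff {x y : EuclideanSpace ℝ (Fin 3)} (hx : x ≠ 0) (hy : y ≠ 0)
    (hle : ‖y‖ ≤ ‖x‖) : ‖(‖x‖⁻¹ • x) - (‖y‖⁻¹ • y)‖ ≤ 2 * ‖x - y‖ / ‖x‖ := by
  have hx0 : (0:ℝ) < ‖x‖ := norm_pos_iff.mpr hx
  have hy0 : (0:ℝ) < ‖y‖ := norm_pos_iff.mpr hy
  have key : (‖x‖⁻¹ • x) - (‖y‖⁻¹ • y)
      = ‖x‖⁻¹ • (x - y) + (‖x‖⁻¹ - ‖y‖⁻¹) • y := by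
    rw [smul_sub, sub_smul]; abel
  rw [key]
  have h1 : ‖‖x‖⁻¹ • (x - y)‖ = ‖x‖⁻¹ * ‖x - y‖ := by
    rw [norm_smul, Real.norm_eq_abs, abs_of_pos (by positivity)]
  have h2 : ‖(‖x‖⁻¹ - ‖y‖⁻¹) • y‖ = |‖x‖⁻¹ - ‖y‖⁻¹| * ‖y‖ := by
    rw [norm_smul, Real.norm_eq_abs]
  have h3 : |‖x‖⁻¹ - ‖y‖⁻¹| * ‖y‖ ≤ ‖x - y‖ / ‖x‖ := by
    have : |‖x‖⁻¹ - ‖y‖⁻¹| = |‖y‖ - ‖x‖| / (‖x‖ * ‖y‖) := by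
      rw [eq_div_iff (by positivity), ← abs_of_pos (show (0:ℝ) < ‖x‖ * ‖y‖ by positivity),
        ← abs_mul]
      congr 1
      field_simp
    rw [this]
    have h4 : |‖y‖ - ‖x‖| ≤ ‖x - y‖ := by
      rw [abs_sub_comm]
      exact (abs_norm_sub_norm_le x y).trans le_rfl
    calc |‖y‖ - ‖x‖| / (‖x‖ * ‖y‖) * ‖y‖ = |‖y‖ - ‖x‖| / ‖x‖ := by field_simp
      _ ≤ ‖x - y‖ / ‖x‖ := by gcongr
  calc ‖‖x‖⁻¹ • (x - y) + (‖x‖⁻¹ - ‖y‖⁻¹) • y‖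
      ≤ ‖‖x‖⁻¹ • (x - y)‖ + ‖(‖x‖⁻¹ - ‖y‖⁻¹) • y‖ := norm_add_le _ _
    _ ≤ ‖x - y‖ / ‖x‖ + ‖x - y‖ / ‖x‖ := by
        rw [h1, h2, inv_mul_eq_div]
        exact add_le_add le_rfl h3
    _ = 2 * ‖x - y‖ / ‖x‖ := by ring

lemma hdiff (j k : Fin 3) {x y : EuclideanSpace ℝ (Fin 3)} (hx : x ≠ 0) (hy : y ≠ 0)
    (hle : ‖y‖ ≤ ‖x‖) :
    |x j * x k / ‖x‖ ^ 2 - y j * y k / ‖y‖ ^ 2| ≤ 4 * ‖x - y‖ / ‖x‖ := by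
  have hx0 : (0:ℝ) < ‖x‖ := norm_pos_iff.mpr hx
  have hy0 : (0:ℝ) < ‖y‖ := norm_pos_iff.mpr hy
  set u := ‖x‖⁻¹ • x with hu_def
  set v := ‖y‖⁻¹ • y with hv_def
  have hu : ‖u‖ = 1 := norm_smul_inv_norm hx
  have hv : ‖v‖ = 1 := norm_smul_inv_norm hy
  have hux : ∀ i, u i = ‖x‖⁻¹ * x i := fun i => rfl
  have hvy : ∀ i, v i = ‖y‖⁻¹ * y i := fun i => rfl
  have e1 : x j * x k / ‖x‖ ^ 2 = u j * u k := by
    rw [hux, hux]; field_simp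
  have e2 : y j * y k / ‖y‖ ^ 2 = v j * v k := by
    rw [hvy, hvy]; field_simp
  rw [e1, e2]
  have hd : ∀ i : Fin 3, |u i - v i| ≤ ‖u - v‖ := by
    intro i
    have : u i - v i = (u - v) i := rfl
    rw [this]
    exact coord_abs _ i
  have huv : ‖u - v‖ ≤ 2 * ‖x - y‖ / ‖x‖ := unit_diff hx hy hle
  have step : |u j * u k - v j * v k| ≤ 2 * ‖u - v‖ := by
    have : u j * u k - v j * v k = u j * (u k - v k) + v k * (u j - v j) := by ring
    rw [this]
    calc |u j * (u k - v k) + v k * (u j - v j)|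
        ≤ |u j * (u k - v k)| + |v k * (u j - v j)| := abs_add_le _ _
      _ = |u j| * |u k - v k| + |v k| * |u j - v j| := by rw [abs_mul, abs_mul]
      _ ≤ 1 * ‖u - v‖ + 1 * ‖u - v‖ := by
          gcongr
          · exact (coord_abs u j).trans (le_of_eq hu)
          · exact hd k
          · exact (coord_abs v k).trans (le_of_eq hv)
          · exact hd j
      _ = 2 * ‖u - v‖ := by ring
  calc |u j * u k - v j * v k| ≤ 2 * ‖u - v‖ := step
    _ ≤ 2 * (2 * ‖x - y‖ / ‖x‖) := by gcongr
    _ = 4 * ‖x - y‖ / ‖x‖ := by ring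

lemma Gbound (j k : Fin 3) {z : EuclideanSpace ℝ (Fin 3)} (hz : z ≠ 0) (w : ℝ) :
    |z j * z k * w / ‖z‖ ^ 2| ≤ |w| := by
  have hz0 : (0:ℝ) < ‖z‖ := norm_pos_iff.mpr hz
  rw [abs_div, abs_mul, abs_mul, abs_of_pos (by positivity : (0:ℝ) < ‖z‖ ^ 2)]
  rw [div_le_iff₀ (by positivity)]
  calc |z j| * |z k| * |w| ≤ ‖z‖ * ‖z‖ * |w| := by
        gcongr
        · exact coord_abs z j
        · exact coord_abs z k
    _ = |w| * ‖z‖ ^ 2 := by ring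

lemma G_lip_core (j k : Fin 3) (f : EuclideanSpace ℝ (Fin 3) → ℝ) (K : ℝ) (hK : 0 ≤ K)
    {x y : EuclideanSpace ℝ (Fin 3)} (hx : x ≠ 0) (hy : y ≠ 0) (hle : ‖y‖ ≤ ‖x‖)
    (hfl : |f x - f y| ≤ K * ‖x - y‖) (hfy : |f y| ≤ K * ‖y‖) :
    |x j * x k * f x / ‖x‖ ^ 2 - y j * y k * f y / ‖y‖ ^ 2| ≤ 5 * K * ‖x - y‖ := by
  have hx0 : (0:ℝ) < ‖x‖ := norm_pos_iff.mpr hx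
  have hy0 : (0:ℝ) < ‖y‖ := norm_pos_iff.mpr hy
  set A := x j * x k / ‖x‖ ^ 2 with hA
  set B := y j * y k / ‖y‖ ^ 2 with hB
  have hAabs : |A| ≤ 1 := by
    rw [hA, abs_div, abs_mul, abs_of_pos (by positivity : (0:ℝ) < ‖x‖ ^ 2),
      div_le_one (by positivity)]
    calc |x j| * |x k| ≤ ‖x‖ * ‖x‖ := by
          gcongr
          · exact coord_abs x j
          · exact coord_abs x k
      _ = ‖x‖ ^ 2 := (sq ‖x‖).symm
  have hdec : x j * x k * f x / ‖x‖ ^ 2 - y j * y k * f y / ‖y‖ ^ 2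
      = A * (f x - f y) + f y * (A - B) := by
    rw [hA, hB]; field_simp; ring
  rw [hdec]
  have hfy' : |f y| ≤ K * ‖x‖ := hfy.trans (by gcongr)
  calc |A * (f x - f y) + f y * (A - B)|
      ≤ |A * (f x - f y)| + |f y * (A - B)| := abs_add_le _ _
    _ = |A| * |f x - f y| + |f y| * |A - B| := by rw [abs_mul, abs_mul]
    _ ≤ 1 * (K * ‖x - y‖) + (K * ‖x‖) * (4 * ‖x - y‖ / ‖x‖) := by
        gcongr
        · exact hdiff j k hx hy hle
    _ = 5 * K * ‖x - y‖ := by field_simp; ring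



open Real

/-- The matrix coefficients `a_{j,k}(x)` from the paper, for `x ≠ 0`.
For the diagonal entries we use that e.g. `x₂² + x₃² = |x|² - x₁²`. -/
noncomputable def aCoef (a b d : ℝ → ℝ) (c : EuclideanSpace ℝ (Fin 3) → ℝ)
    (x : EuclideanSpace ℝ (Fin 3)) (j k : Fin 3) : ℝ :=
  if j = k then
    a ‖x‖ + (‖x‖ ^ 2 - x j ^ 2) * (c x + b ‖x‖) / ‖x‖ ^ 2 - x j ^ 2 * d ‖x‖ / ‖x‖ ^ 2
  else
    -(x j * x k * (b ‖x‖ + c x + d ‖x‖)) / ‖x‖ ^ 2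

/-- The coefficients extended to `x = 0` by `a_{j,j}(0) = a(0)`, `a_{j,k}(0) = 0`
for `j ≠ k`. -/
noncomputable def aCoefExt (a b d : ℝ → ℝ) (c : EuclideanSpace ℝ (Fin 3) → ℝ)
    (x : EuclideanSpace ℝ (Fin 3)) (j k : Fin 3) : ℝ :=
  haveI := Classical.propDecidable (x = 0)
  if x = 0 then (if j = k then a 0 else 0) else aCoef a b d c x j k

/-- under the regularity assumptions `a, b, d ∈ C²([0,R])`,
`c ∈ C²(Ω̄)` together with `b(0) + c(0) = 0` and `d(0) = 0`, each extended
coefficient `a_{j,k}` is Lipschitz-continuous on `Ω̄`. -/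
theorem stmt3 (R : ℝ) (hR : 0 < R)
    (a b d : ℝ → ℝ) (c : EuclideanSpace ℝ (Fin 3) → ℝ)
    (ha : ContDiffOn ℝ 2 a (Set.Icc 0 R)) (hb : ContDiffOn ℝ 2 b (Set.Icc 0 R))
    (hd : ContDiffOn ℝ 2 d (Set.Icc 0 R))
    (hc : ContDiffOn ℝ 2 c (Metric.closedBall 0 R))
    (hbc0 : b 0 + c 0 = 0) (hd0 : d 0 = 0) :
    ∃ L : ℝ, 0 < L ∧
      ∀ x ∈ Metric.closedBall (0 : EuclideanSpace ℝ (Fin 3)) R,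
        ∀ y ∈ Metric.closedBall (0 : EuclideanSpace ℝ (Fin 3)) R,
          ∀ j k : Fin 3,
            |aCoefExt a b d c x j k - aCoefExt a b d c y j k| ≤ L * ‖x - y‖ := by
  classical
  have hIcc : UniqueDiffOn ℝ (Set.Icc (0:ℝ) R) := uniqueDiffOn_Icc hR
  obtain ⟨Ka, hKa0, hKa⟩ := lip_aux (ha.of_le one_le_two) (convex_Icc 0 R) isCompact_Icc hIcc
  obtain ⟨Kb, hKb0, hKb⟩ := lip_aux (hb.of_le one_le_two) (convex_Icc 0 R) isCompact_Icc hIcc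
  obtain ⟨Kd, hKd0, hKd⟩ := lip_aux (hd.of_le one_le_two) (convex_Icc 0 R) isCompact_Icc hIcc
  have hballU : UniqueDiffOn ℝ (Metric.closedBall (0 : EuclideanSpace ℝ (Fin 3)) R) := by
    apply uniqueDiffOn_convex (convex_closedBall _ _)
    rw [interior_closedBall _ hR.ne']
    exact Metric.nonempty_ball.mpr hR
  obtain ⟨Kc, hKc0, hKc⟩ := lip_aux (hc.of_le one_le_two) (convex_closedBall _ _)
    (isCompact_closedBall _ _) hballU
  set f : EuclideanSpace ℝ (Fin 3) → ℝ := fun z => b ‖z‖ + c z + d ‖z‖ with hf_def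
  set Kf : ℝ := Kb + Kc + Kd with hKf_def
  have hKf0 : 0 ≤ Kf := by positivity
  set K1 : ℝ := Ka + Kc + Kb with hK1_def
  refine ⟨K1 + 5 * Kf + 1, by positivity, fun x hx y hy j k => ?_⟩
  have hxR : ‖x‖ ≤ R := mem_closedBall_zero_iff.mp hx
  have hyR : ‖y‖ ≤ R := mem_closedBall_zero_iff.mp hy
  have hxI : ‖x‖ ∈ Set.Icc (0:ℝ) R := ⟨norm_nonneg _, hxR⟩
  have hyI : ‖y‖ ∈ Set.Icc (0:ℝ) R := ⟨norm_nonneg _, hyR⟩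
  have hnn : ∀ z w : EuclideanSpace ℝ (Fin 3), ‖(‖z‖ : ℝ) - ‖w‖‖ ≤ ‖z - w‖ := by
    intro z w
    rw [Real.norm_eq_abs]
    exact abs_norm_sub_norm_le z w
  -- Lipschitz bound for f on the ball
  have hf_lip : ∀ z ∈ Metric.closedBall (0 : EuclideanSpace ℝ (Fin 3)) R,
      ∀ w ∈ Metric.closedBall (0 : EuclideanSpace ℝ (Fin 3)) R,
      |f z - f w| ≤ Kf * ‖z - w‖ := by
    intro z hz w hw
    have hzI : ‖z‖ ∈ Set.Icc (0:ℝ) R := ⟨norm_nonneg _, mem_closedBall_zero_iff.mp hz⟩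
    have hwI : ‖w‖ ∈ Set.Icc (0:ℝ) R := ⟨norm_nonneg _, mem_closedBall_zero_iff.mp hw⟩
    have h1 : |b ‖z‖ - b ‖w‖| ≤ Kb * ‖z - w‖ :=
      (hKb _ hzI _ hwI).trans (by have := hnn z w; nlinarith [norm_nonneg (z - w)])
    have h2 : |d ‖z‖ - d ‖w‖| ≤ Kd * ‖z - w‖ :=
      (hKd _ hzI _ hwI).trans (by have := hnn z w; nlinarith [norm_nonneg (z - w)])
    have h3 : |c z - c w| ≤ Kc * ‖z - w‖ := hKc _ hz _ hw
    calc |f z - f w| = |(b ‖z‖ - b ‖w‖) + (c z - c w) + (d ‖z‖ - d ‖w‖)| := by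
          rw [hf_def]; ring_nf
      _ ≤ |b ‖z‖ - b ‖w‖| + |c z - c w| + |d ‖z‖ - d ‖w‖| := abs_add_three _ _ _
      _ ≤ Kb * ‖z - w‖ + Kc * ‖z - w‖ + Kd * ‖z - w‖ := by gcongr
      _ = Kf * ‖z - w‖ := by rw [hKf_def]; ring
  have hf0 : f 0 = 0 := by
    rw [hf_def]; simp only [norm_zero]; linarith
  have hfz : ∀ z ∈ Metric.closedBall (0 : EuclideanSpace ℝ (Fin 3)) R, |f z| ≤ Kf * ‖z‖ := by
    intro z hz
    have := hf_lip z hz 0 (Metric.mem_closedBall_self hR.le)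
    rwa [hf0, sub_zero, sub_zero] at this
  -- representation of aCoefExt
  have hrep : ∀ z : EuclideanSpace ℝ (Fin 3), ∀ j k : Fin 3,
      aCoefExt a b d c z j k =
        (if j = k then a ‖z‖ + c z + b ‖z‖ else 0)
          - (if z = 0 then 0 else z j * z k * f z / ‖z‖ ^ 2) := by
    intro z j k
    by_cases hz : z = 0
    · subst hz
      by_cases hjk : j = k <;>
        simp [aCoefExt, hjk] <;> linarith
    · have h2 : ‖z‖ ≠ 0 := norm_ne_zero_iff.mpr hz
      simp only [aCoefExt, aCoef, if_neg hz, hf_def]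
      by_cases hjk : j = k
      · subst hjk
        simp only [if_pos rfl, eq_self_iff_true, if_true]
        field_simp
        ring
      · simp only [if_neg hjk]
        ring
  rw [hrep x j k, hrep y j k]
  -- triangle inequality split
  set P1 := (if j = k then a ‖x‖ + c x + b ‖x‖ else 0) with hP1
  set P2 := (if j = k then a ‖y‖ + c y + b ‖y‖ else 0) with hP2
  set Q1 := (if x = 0 then 0 else x j * x k * f x / ‖x‖ ^ 2) with hQ1
  set Q2 := (if y = 0 then 0 else y j * y k * f y / ‖y‖ ^ 2) with hQ2
  have hsplit : |P1 - Q1 - (P2 - Q2)| ≤ |P1 - P2| + |Q1 - Q2| := by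
    have : P1 - Q1 - (P2 - Q2) = (P1 - P2) - (Q1 - Q2) := by ring
    rw [this]
    exact abs_sub _ _
  have hP : |P1 - P2| ≤ K1 * ‖x - y‖ := by
    by_cases hjk : j = k
    · rw [hP1, hP2, if_pos hjk, if_pos hjk]
      have h1 : |a ‖x‖ - a ‖y‖| ≤ Ka * ‖x - y‖ :=
        (hKa _ hxI _ hyI).trans (by have := hnn x y; nlinarith [norm_nonneg (x - y)])
      have h2 : |b ‖x‖ - b ‖y‖| ≤ Kb * ‖x - y‖ :=
        (hKb _ hxI _ hyI).trans (by have := hnn x y; nlinarith [norm_nonneg (x - y)])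
      have h3 : |c x - c y| ≤ Kc * ‖x - y‖ := hKc _ hx _ hy
      calc |a ‖x‖ + c x + b ‖x‖ - (a ‖y‖ + c y + b ‖y‖)|
          = |(a ‖x‖ - a ‖y‖) + (c x - c y) + (b ‖x‖ - b ‖y‖)| := by ring_nf
        _ ≤ |a ‖x‖ - a ‖y‖| + |c x - c y| + |b ‖x‖ - b ‖y‖| := abs_add_three _ _ _
        _ ≤ Ka * ‖x - y‖ + Kc * ‖x - y‖ + Kb * ‖x - y‖ := by gcongr
        _ = K1 * ‖x - y‖ := by rw [hK1_def]; ring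
    · rw [hP1, hP2, if_neg hjk, if_neg hjk]
      simp only [sub_zero, abs_zero]
      positivity
  have hQ : |Q1 - Q2| ≤ 5 * Kf * ‖x - y‖ := by
    by_cases hx0 : x = 0
    · by_cases hy0 : y = 0
      · rw [hQ1, hQ2, if_pos hx0, if_pos hy0]
        simp only [sub_zero, abs_zero]
        positivity
      · rw [hQ1, hQ2, if_pos hx0, if_neg hy0, zero_sub, abs_neg]
        have hxy : ‖x - y‖ = ‖y‖ := by rw [hx0, zero_sub, norm_neg]
        calc |y j * y k * f y / ‖y‖ ^ 2| ≤ |f y| := Gbound j k hy0 _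
          _ ≤ Kf * ‖y‖ := hfz y hy
          _ ≤ 5 * Kf * ‖x - y‖ := by rw [hxy]; nlinarith [norm_nonneg y]
    · by_cases hy0 : y = 0
      · rw [hQ1, hQ2, if_neg hx0, if_pos hy0, sub_zero]
        have hxy : ‖x - y‖ = ‖x‖ := by rw [hy0, sub_zero]
        calc |x j * x k * f x / ‖x‖ ^ 2| ≤ |f x| := Gbound j k hx0 _
          _ ≤ Kf * ‖x‖ := hfz x hx
          _ ≤ 5 * Kf * ‖x - y‖ := by rw [hxy]; nlinarith [norm_nonneg x]
      · rw [hQ1, hQ2, if_neg hx0, if_neg hy0]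
        rcases le_total ‖y‖ ‖x‖ with hle | hle
        · exact G_lip_core j k f Kf hKf0 hx0 hy0 hle (hf_lip x hx y hy) (hfz y hy)
        · rw [abs_sub_comm, show ‖x - y‖ = ‖y - x‖ from norm_sub_rev x y]
          exact G_lip_core j k f Kf hKf0 hy0 hx0 hle (hf_lip y hy x hx) (hfz x hx)
  calc |P1 - Q1 - (P2 - Q2)| ≤ |P1 - P2| + |Q1 - Q2| := hsplit
    _ ≤ K1 * ‖x - y‖ + 5 * Kf * ‖x - y‖ := add_le_add hP hQ
    _ ≤ (K1 + 5 * Kf + 1) * ‖x - y‖ := by nlinarith [norm_nonneg (x - y)]
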